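/- arXiv:1802.06566 — 3 statements merged into one kernel-verified Lean document; each statement's English description precedes it below -/
import Mathlib

section
/- For every integer n ≥ 1 and every real d ≥ 2, the polynomial equation (1 - z)(z d + 1)^n = 1 has a unique root in the interval (0, 1]. -/
/-- For every integer `n ≥ 1` and every real `d ≥ 2`, the equation
`(1 - z)(z d + 1)^n = 1` has a unique root in `(0, 1]`. -/
theorem unique_root_in_Ioc (n : ℕ) (hn : 1 ≤ n) (d : ℝ) (hd : 2 ≤ d) :
    ∃! z : ℝ, z ∈ Set.Ioc (0 : ℝ) 1 ∧ (1 - z) * (z * d + 1) ^ n = 1 := by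
  obtain ⟨m, rfl⟩ : ∃ m, n = m + 1 := ⟨n - 1, (Nat.succ_pred_eq_of_pos hn).symm⟩
  set f : ℝ → ℝ := fun z => (1 - z) * (z * d + 1) ^ (m + 1) with hf
  have hm1 : (1 : ℝ) ≤ (m + 1 : ℕ) := by exact_mod_cast Nat.one_le_iff_ne_zero.mpr (Nat.succ_ne_zero m)
  set N : ℝ := ((m + 1 : ℕ) : ℝ) with hN
  have hden : 0 < N * d + d := by nlinarith
  set a : ℝ := (N * d - 1) / (N * d + d) with ha
  have ha0 : 0 < a := by
    apply div_pos _ hden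
    nlinarith
  have ha1 : a < 1 := by
    rw [ha, div_lt_one hden]; nlinarith
  set g : ℝ → ℝ := fun z => (z * d + 1) ^ m * (N * d * (1 - z) - (z * d + 1)) with hg
  have hderiv : ∀ x : ℝ, HasDerivAt f (g x) x := by
    intro x
    have h1 : HasDerivAt (fun z : ℝ => 1 - z) (-1) x := by
      simpa using (hasDerivAt_id x).const_sub 1
    have h2 : HasDerivAt (fun z : ℝ => z * d + 1) d x := by
      simpa using ((hasDerivAt_id x).mul_const d).add_const 1
    have h3 := h2.fun_pow (m + 1)
    have h4 := h1.fun_mul h3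
    refine h4.congr_deriv (Eq.symm ?_)
    show (x * d + 1) ^ m * (N * d * (1 - x) - (x * d + 1)) = _
    rw [hN, Nat.add_sub_cancel, pow_succ]
    push_cast
    ring
  have hcont : Continuous f := by
    apply Continuous.mul
    · exact continuous_const.sub continuous_id
    · exact ((continuous_id.mul continuous_const).add continuous_const).pow _
  have hpos : ∀ x : ℝ, 0 ≤ x → 0 < x * d + 1 := fun x hx => by nlinarith
  -- strict mono on [0, a]
  have hmono : StrictMonoOn f (Set.Icc 0 a) := by
    apply strictMonoOn_of_deriv_pos (convex_Icc 0 a) hcont.continuousOn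
    intro x hx
    rw [interior_Icc] at hx
    rw [(hderiv x).deriv]
    apply mul_pos (pow_pos (hpos x hx.1.le) m)
    have hxa : x * (N * d + d) < N * d - 1 := (lt_div_iff₀ hden).mp hx.2
    nlinarith
  -- strict anti on [a, 1]
  have hanti : StrictAntiOn f (Set.Icc a 1) := by
    apply strictAntiOn_of_deriv_neg (convex_Icc a 1) hcont.continuousOn
    intro x hx
    rw [interior_Icc] at hx
    rw [(hderiv x).deriv]
    have hx0 : 0 < x := lt_trans ha0 hx.1
    apply mul_neg_of_pos_of_neg (pow_pos (hpos x hx0.le) m)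
    have hxa : N * d - 1 < x * (N * d + d) := (div_lt_iff₀ hden).mp hx.1
    nlinarith
  have hf0 : f 0 = 1 := by simp [hf]
  have hf1 : f 1 = 0 := by simp [hf]
  have hfa : 1 < f a := by
    have := hmono (Set.left_mem_Icc.mpr ha0.le) ⟨ha0.le, le_refl a⟩ ha0
    rwa [hf0] at this
  -- existence via IVT on [a, 1]
  obtain ⟨c, hc, hfc⟩ : ∃ c ∈ Set.Icc a 1, f c = 1 := by
    have h := intermediate_value_Icc' ha1.le hcont.continuousOn
    have : (1 : ℝ) ∈ Set.Icc (f 1) (f a) := ⟨by rw [hf1]; norm_num, hfa.le⟩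
    obtain ⟨c, hc, hfc⟩ := h this
    exact ⟨c, hc, hfc⟩
  have hac : a < c := by
    rcases lt_or_eq_of_le hc.1 with h | h
    · exact h
    · exfalso; rw [← h] at hfc; rw [hfc] at hfa; exact lt_irrefl 1 hfa
  refine ⟨c, ⟨⟨lt_trans ha0 hac, hc.2⟩, hfc⟩, ?_⟩
  rintro y ⟨⟨hy0, hy1⟩, hfy'⟩
  have hfy : f y = 1 := hfy'
  have hay : a < y := by
    by_contra h
    push_neg at h
    have := hmono (Set.left_mem_Icc.mpr ha0.le) ⟨hy0.le, h⟩ hy0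
    rw [hf0] at this; rw [hfy] at this
    exact lt_irrefl 1 this
  exact hanti.injOn ⟨hay.le, hy1⟩ ⟨hac.le, hc.2⟩ (by rw [hfy, hfc])
end

section
/- With the linear drift b defined on the region x_{0,0} > 0 (see context), the point x⋆ given by x⋆_{0,0} = 1-λ-1/d, x⋆_{0,1} = 1/d, x⋆_{1,1} = λ and zero elsewhere is the unique solution of the system b_{i,j}(x) = 0 for all 0 ≤ i ≤ j ≤ I together with the normalization Σ_{i,j} x_{i,j} = 1. -/
/-- The fixed point when `λ < 1 - 1/d`. -/
noncomputable def xstar (lam d : ℝ) : ℕ → ℕ → ℝ := fun i j =>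
  if i = 0 ∧ j = 0 then 1 - lam - 1 / d
  else if i = 0 ∧ j = 1 then 1 / d
  else if i = 1 ∧ j = 1 then lam
  else 0

/-- Any solution of the linear drift equations `b_{i,j}(x) = 0` (for all `0 ≤ i ≤ j ≤ I`)
together with the normalization `Σ x_{i,j} = 1` coincides with `x⋆`. -/
theorem fixed_point_unique (lam d : ℝ) (I : ℕ) (hI : 1 < I)
    (h0 : 0 < lam) (hd : 2 ≤ d) (hlt : lam < 1 - 1 / d) (x : ℕ → ℕ → ℝ)
    (hb00 : -lam + lam * d * ((∑ j ∈ Finset.Icc 0 I, x 0 j) - x 0 0) = 0)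
    (hb01 : x 1 1 - lam * d * x 0 1 = 0)
    (hb11 : -(x 1 1) + lam + lam * d * ((∑ j ∈ Finset.Icc 1 I, x 1 j) - x 1 1) = 0)
    (hb0j : ∀ j, 1 < j → j ≤ I → x 1 j - lam * d * x 0 j = 0)
    (hbij : ∀ i j, 1 ≤ i → i < j → j ≤ I → x (i + 1) j - x i j - lam * d * x i j = 0)
    (hbii : ∀ i, 1 < i → i ≤ I →
      -(x i i) + lam * d * ((∑ j ∈ Finset.Icc i I, x i j) - x i i) = 0)
    (hnorm : (∑ i ∈ Finset.range (I + 1), ∑ j ∈ Finset.Icc i I, x i j) = 1) :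
    ∀ i j, i ≤ j → j ≤ I → x i j = xstar lam d i j := by
  have hd0 : (0:ℝ) < d := by linarith
  have hlam : lam ≠ 0 := ne_of_gt h0
  have hld : (0:ℝ) < lam * d := mul_pos h0 hd0
  have hld' : lam * d ≠ 0 := ne_of_gt hld
  have hcpos : (0:ℝ) < 1 + lam * d := by linarith
  have hc0 : (1 + lam * d) ≠ 0 := ne_of_gt hcpos
  -- step 1 : propagation along a column
  have step1 : ∀ j, 2 ≤ j → j ≤ I → ∀ i, 1 ≤ i → i ≤ j →
      x i j = (1 + lam * d) ^ (i - 1) * x 1 j := by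
    intro j hj2 hjI i
    induction i with
    | zero => intro h; omega
    | succ n ih =>
      intro _ hle
      rcases Nat.eq_zero_or_pos n with hn | hn
      · subst hn; simp
      · have hrec := hbij n j hn (by omega) hjI
        have hx : x (n+1) j = (1 + lam*d) * x n j := by linarith
        rw [hx, ih hn (by omega),
          show n + 1 - 1 = (n - 1) + 1 by omega, pow_succ]
        ring
  -- step 2 : diagonal equations in terms of row 1
  have step2 : ∀ i, 2 ≤ i → i ≤ I →
      x 1 i = lam * d * ∑ j ∈ Finset.Icc (i+1) I, x 1 j := by
    intro i hi2 hiI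
    have hsplit : Finset.Icc i I = insert i (Finset.Icc (i+1) I) := by
      ext a; simp [Finset.mem_Icc, Finset.mem_insert]; omega
    have hnot : i ∉ Finset.Icc (i+1) I := by simp
    have hsum : ∑ j ∈ Finset.Icc (i+1) I, x i j
        = (1 + lam*d)^(i-1) * ∑ j ∈ Finset.Icc (i+1) I, x 1 j := by
      rw [Finset.mul_sum]
      apply Finset.sum_congr rfl
      intro j hj
      simp only [Finset.mem_Icc] at hj
      exact step1 j (by omega) hj.2 i (by omega) (by omega)
    have hxii := step1 i hi2 hiI i (by omega) le_rfl
    have heq := hbii i (by omega) hiI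
    rw [hsplit, Finset.sum_insert hnot] at heq
    have h1 : -(x i i) + lam*d * (∑ j ∈ Finset.Icc (i+1) I, x i j) = 0 := by
      linarith
    rw [hxii, hsum] at h1
    have h2 : (1+lam*d)^(i-1) *
        (lam*d * (∑ j ∈ Finset.Icc (i+1) I, x 1 j) - x 1 i) = 0 := by
      linear_combination h1
    rcases mul_eq_zero.mp h2 with h | h
    · exact absurd h (pow_ne_zero _ hc0)
    · linarith
  -- step 3 : downward induction kills row 1 beyond column 1
  have step3 : ∀ k i, 2 ≤ i → i ≤ I → I - i ≤ k → x 1 i = 0 := by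
    intro k
    induction k with
    | zero =>
      intro i hi2 hiI hk
      have hiI' : i = I := by omega
      rw [step2 i hi2 hiI, Finset.Icc_eq_empty (by omega),
        Finset.sum_empty, mul_zero]
    | succ n ih =>
      intro i hi2 hiI hk
      rw [step2 i hi2 hiI]
      have hz : ∑ j ∈ Finset.Icc (i+1) I, x 1 j = 0 := by
        apply Finset.sum_eq_zero
        intro j hj
        simp only [Finset.mem_Icc] at hj
        exact ih j (by omega) hj.2 (by omega)
      rw [hz, mul_zero]
  have hz1 : ∀ j, 2 ≤ j → j ≤ I → x 1 j = 0 := fun j h2 hI' => step3 I j h2 hI' (by omega)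
  have hzij : ∀ i j, 1 ≤ i → i ≤ j → 2 ≤ j → j ≤ I → x i j = 0 := by
    intro i j h1 hle h2 hIj
    rw [step1 j h2 hIj i h1 hle, hz1 j h2 hIj, mul_zero]
  have hz0 : ∀ j, 2 ≤ j → j ≤ I → x 0 j = 0 := by
    intro j h2 hIj
    have h := hb0j j (by omega) hIj
    rw [hz1 j h2 hIj] at h
    have h' : lam * d * x 0 j = 0 := by linarith
    exact (mul_eq_zero.mp h').resolve_left hld'
  -- row 1 sum
  have hsplit1 : Finset.Icc 1 I = insert 1 (Finset.Icc 2 I) := by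
    ext a; simp [Finset.mem_Icc, Finset.mem_insert]; omega
  have hS1 : ∑ j ∈ Finset.Icc 1 I, x 1 j = x 1 1 := by
    rw [hsplit1, Finset.sum_insert (by simp),
      Finset.sum_eq_zero (fun j hj => hz1 j (Finset.mem_Icc.mp hj).1 (Finset.mem_Icc.mp hj).2)]
    ring
  have hx11 : x 1 1 = lam := by rw [hS1] at hb11; linarith
  have hx01 : x 0 1 = 1 / d := by
    rw [hx11] at hb01
    have h2 : lam * (d * x 0 1 - 1) = 0 := by linear_combination -hb01
    have h3 := (mul_eq_zero.mp h2).resolve_left hlam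
    field_simp
    linarith
  -- row 0 sum
  have hS0 : ∑ j ∈ Finset.Icc 0 I, x 0 j = x 0 0 + 1/d := by
    have hsp : Finset.Icc 0 I = insert 0 (insert 1 (Finset.Icc 2 I)) := by
      ext a; simp [Finset.mem_Icc, Finset.mem_insert]; omega
    rw [hsp, Finset.sum_insert (by simp), Finset.sum_insert (by simp),
      Finset.sum_eq_zero (fun j hj => hz0 j (Finset.mem_Icc.mp hj).1 (Finset.mem_Icc.mp hj).2),
      hx01]
    ring
  -- rows ≥ 2 vanish
  have hrow : ∀ i ∈ Finset.Icc 2 I, ∑ j ∈ Finset.Icc i I, x i j = 0 := by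
    intro i hi
    simp only [Finset.mem_Icc] at hi
    apply Finset.sum_eq_zero
    intro j hj
    simp only [Finset.mem_Icc] at hj
    exact hzij i j (by omega) hj.1 (by omega) hj.2
  have hrange : Finset.range (I+1) = insert 0 (insert 1 (Finset.Icc 2 I)) := by
    ext a; simp [Finset.mem_Icc, Finset.mem_insert, Finset.mem_range]; omega
  rw [hrange, Finset.sum_insert (by simp), Finset.sum_insert (by simp),
    Finset.sum_eq_zero hrow, hS0, hS1, hx11] at hnorm
  have hx00 : x 0 0 = 1 - lam - 1/d := by linarith
  -- conclusion
  intro i j hij hjI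
  rcases i with _ | _ | i <;> rcases j with _ | _ | j
  · simpa [xstar] using hx00
  · simpa [xstar] using hx01
  · simp only [xstar]
    norm_num
    exact hz0 (j+2) (by omega) hjI
  · omega
  · simpa [xstar] using hx11
  · simp only [xstar]
    norm_num
    exact hz1 (j+2) (by omega) hjI
  · omega
  · omega
  · simp only [xstar]
    norm_num
    exact hzij (i+2) (j+2) (by omega) hij (by omega) hjI
end

section
/- Let d ≥ 2 be real and define F(z) = (λd)^{j⋆-2} (1 + 1/(z(1+λd)))^{j⋆-1} (λd - 1 + λd/(z(1+λd))) · C - z, where C = (1+λd)(1-λ) - 1/(1+λd)^{j⋆} > 0, λ ∈ (λ⋆_{j⋆}, λ⋆_{j⋆+1}), and j⋆ ≥ 2. Then F is strictly decreasing on (0,1], lim_{z→0+} F(z) = +∞, and F(1) < 0; consequently F has a unique root in (0,1). -/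
set_option maxHeartbeats 1000000

open Filter

/-- The function `F` determining `x⋆_{j⋆,j⋆}` is strictly decreasing on `(0,1]`, tends to
`+∞` at `0⁺`, is negative at `1`, and hence has a unique root in `(0,1)`. -/
theorem F_unique_root (lam d : ℝ) (J : ℕ) (hd : 2 ≤ d) (hJ : 2 ≤ J)
    (h0 : 0 < lam) (h1 : lam < 1) (hld : 1 ≤ lam * d)
    (hlow : (1 - lam) * (lam * d + 1) ^ J < 1)
    (hup : 1 < (1 - lam) * (lam * d + 1) ^ (J + 1))
    (C : ℝ) (hC : C = (1 + lam * d) * (1 - lam) - 1 / (1 + lam * d) ^ J)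
    (F : ℝ → ℝ)
    (hF : ∀ z : ℝ, F z = (lam * d) ^ (J - 2) * (1 + 1 / (z * (1 + lam * d))) ^ (J - 1)
        * (lam * d - 1 + lam * d / (z * (1 + lam * d))) * C - z) :
    0 < C ∧ StrictAntiOn F (Set.Ioc 0 1) ∧
    Tendsto F (nhdsWithin 0 (Set.Ioi 0)) atTop ∧
    F 1 < 0 ∧ ∃! z : ℝ, z ∈ Set.Ioo (0 : ℝ) 1 ∧ F z = 0 := by
  obtain ⟨k, rfl⟩ : ∃ k, J = k + 2 := ⟨J - 2, by omega⟩
  set a : ℝ := lam * d with ha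
  set b : ℝ := 1 + a with hb
  clear_value b
  clear_value a
  have ha1 : (1:ℝ) ≤ a := hld
  have hb2 : (2:ℝ) ≤ b := by simp [hb]; linarith
  have hbpos : (0:ℝ) < b := by linarith
  have hbJ : (0:ℝ) < b ^ (k+2) := pow_pos hbpos _
  -- C > 0
  have hCpos : 0 < C := by
    rw [hC]
    rw [sub_pos, div_lt_iff₀ hbJ]
    have : (1:ℝ) < (1 - lam) * b ^ (k + 2 + 1) := by
      simpa [hb, add_comm a 1] using hup
    calc (1:ℝ) < (1 - lam) * b ^ (k + 2 + 1) := this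
      _ = b * (1 - lam) * b ^ (k+2) := by rw [pow_succ]; ring
  have hlam1 : lam < 1 := h1
  -- C < a / b^J
  have hCub : C < a / b ^ (k+2) := by
    rw [hC, sub_lt_iff_lt_add]
    have hlow' : (1 - lam) * b ^ (k+2) < 1 := by
      simpa [hb, add_comm a 1] using hlow
    have h1la : (1 - lam) < 1 / b ^ (k+2) := by
      rw [lt_div_iff₀ hbJ]; exact hlow'
    calc b * (1 - lam) < b * (1 / b ^ (k+2)) := by
          apply mul_lt_mul_of_pos_left h1la hbpos
      _ = a / b ^ (k+2) + 1 / b ^ (k+2) := by rw [hb]; ring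
  -- the auxiliary product function
  have key : ∀ z ∈ Set.Ioc (0:ℝ) 1, ∀ w ∈ Set.Ioc (0:ℝ) 1, z < w →
      a ^ k * (1 + 1 / (w * b)) ^ (k+1) * (a - 1 + a / (w * b)) * C
        ≤ a ^ k * (1 + 1 / (z * b)) ^ (k+1) * (a - 1 + a / (z * b)) * C := by
    intro z hz w hw hzw
    have hz0 : 0 < z := hz.1
    have hw0 : 0 < w := hw.1
    have hzb : 0 < z * b := mul_pos hz0 hbpos
    have hwb : 0 < w * b := mul_pos hw0 hbpos
    have hle : 1 / (w * b) ≤ 1 / (z * b) := by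
      apply one_div_le_one_div_of_le hzb
      exact mul_le_mul_of_nonneg_right hzw.le hbpos.le
    have h1 : (0:ℝ) ≤ 1 + 1 / (w * b) := by positivity
    have h2 : (1 + 1 / (w * b)) ^ (k+1) ≤ (1 + 1 / (z * b)) ^ (k+1) :=
      pow_le_pow_left₀ h1 (by linarith) _
    have h3 : a - 1 + a / (w * b) ≤ a - 1 + a / (z * b) := by
      have : a / (w * b) ≤ a / (z * b) := by
        gcongr
      linarith
    have h4 : (0:ℝ) ≤ a - 1 + a / (w * b) := by
      have : 0 < a / (w * b) := by positivity
      linarith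
    apply mul_le_mul_of_nonneg_right _ hCpos.le
    have hak : (0:ℝ) ≤ a ^ k := by positivity
    calc a ^ k * (1 + 1 / (w * b)) ^ (k+1) * (a - 1 + a / (w * b))
        ≤ a ^ k * (1 + 1 / (z * b)) ^ (k+1) * (a - 1 + a / (w * b)) := by
          apply mul_le_mul_of_nonneg_right _ h4
          exact mul_le_mul_of_nonneg_left h2 hak
      _ ≤ a ^ k * (1 + 1 / (z * b)) ^ (k+1) * (a - 1 + a / (z * b)) := by
          apply mul_le_mul_of_nonneg_left h3
          positivity
  have hFz : ∀ z : ℝ, F z = a ^ k * (1 + 1 / (z * b)) ^ (k+1) * (a - 1 + a / (z * b)) * C - z := by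
    intro z
    simpa [ha, hb] using hF z
  -- strict antitone
  have hanti : StrictAntiOn F (Set.Ioc 0 1) := by
    intro z hz w hw hzw
    rw [hFz z, hFz w]
    have := key z hz w hw hzw
    linarith
  -- tendsto atTop
  have htend : Tendsto F (nhdsWithin 0 (Set.Ioi 0)) atTop := by
    have hu : Tendsto (fun z : ℝ => 1 / (z * b)) (nhdsWithin 0 (Set.Ioi 0)) atTop := by
      have : Tendsto (fun z : ℝ => (1/b) * z⁻¹) (nhdsWithin 0 (Set.Ioi 0)) atTop :=
        (tendsto_inv_nhdsGT_zero).const_mul_atTop (by positivity)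
      refine this.congr (fun z => by field_simp)
    have hg : Tendsto (fun z : ℝ => (a - 1 + a * (1 / (z * b))) * C - 1)
        (nhdsWithin 0 (Set.Ioi 0)) atTop := by
      apply tendsto_atTop_add_const_right
      apply Tendsto.atTop_mul_const hCpos
      apply tendsto_atTop_add_const_left
      exact hu.const_mul_atTop (by linarith)
    apply tendsto_atTop_mono' _ _ hg
    filter_upwards [Ioo_mem_nhdsGT_of_mem (by norm_num : (0:ℝ) ∈ Set.Ico (0:ℝ) 1)] with z hz
    have hz0 : 0 < z := hz.1
    have hz1 : z < 1 := hz.2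
    have hzb : 0 < z * b := mul_pos hz0 hbpos
    have hupos : (0:ℝ) < 1 / (z * b) := by positivity
    rw [hFz z]
    have h4 : (0:ℝ) ≤ (a - 1 + a / (z * b)) * C := by
      have : 0 < a / (z * b) := by positivity
      have : (0:ℝ) ≤ a - 1 + a / (z * b) := by linarith
      positivity
    have hone : (1:ℝ) ≤ a ^ k * (1 + 1 / (z * b)) ^ (k+1) := by
      have h1 : (1:ℝ) ≤ a ^ k := one_le_pow₀ ha1
      have h2 : (1:ℝ) ≤ (1 + 1 / (z * b)) ^ (k+1) :=
        one_le_pow₀ (by linarith)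
      nlinarith
    have : (a - 1 + a / (z * b)) * C ≤ a ^ k * (1 + 1 / (z * b)) ^ (k+1) * ((a - 1 + a / (z * b)) * C) :=
      le_mul_of_one_le_left h4 hone
    have hdiv : a / (z * b) = a * (1 / (z * b)) := by ring
    rw [hdiv] at this ⊢
    nlinarith
  -- F 1 < 0
  have hF1 : F 1 < 0 := by
    rw [hFz 1, one_mul]
    have hM : (0:ℝ) < a ^ k * (1 + 1 / b) ^ (k+1) * (a - 1 + a / b) := by
      have : (0:ℝ) < a / b := by positivity
      have h4 : (0:ℝ) < a - 1 + a / b := by linarith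
      positivity
    have hstep : a ^ k * (1 + 1 / b) ^ (k+1) * (a - 1 + a / b) * C
        < a ^ k * (1 + 1 / b) ^ (k+1) * (a - 1 + a / b) * (a / b ^ (k+2)) :=
      mul_lt_mul_of_pos_left hCub hM
    have hbound : a ^ k * (1 + 1 / b) ^ (k+1) * (a - 1 + a / b) * (a / b ^ (k+2)) ≤ 1 := by
      have e1 : 1 + 1 / b = (b + 1) / b := by field_simp
      have e2 : a - 1 + a / b = (a * b - 1) / b := by
        field_simp; rw [hb]; ring
      rw [e1, e2, div_pow]
      have hab : a * (b + 1) ≤ b ^ 2 := by nlinarith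
      have hab2 : a * b - 1 ≤ b ^ 2 := by nlinarith
      have hab1pos : (0:ℝ) ≤ a * (b + 1) := by positivity
      have habm : (0:ℝ) ≤ a * b - 1 := by nlinarith
      have hpow : (a * (b + 1)) ^ (k+1) ≤ (b ^ 2) ^ (k+1) :=
        pow_le_pow_left₀ hab1pos hab _
      have expand : a ^ k * ((b + 1) ^ (k+1) / b ^ (k+1)) * ((a * b - 1) / b) * (a / b ^ (k+2))
          = a ^ k * a * (b + 1) ^ (k+1) * (a * b - 1) / (b ^ (k+1) * b * b ^ (k+2)) := by
        field_simp
      rw [expand, div_le_one (by positivity)]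
      calc a ^ k * a * (b + 1) ^ (k+1) * (a * b - 1)
          = (a * (b + 1)) ^ (k+1) * (a * b - 1) := by rw [mul_pow]; ring
        _ ≤ (b ^ 2) ^ (k+1) * (b ^ 2) := by
            apply mul_le_mul hpow hab2 habm (by positivity)
        _ = b ^ (k+1) * b * b ^ (k+2) := by ring
    linarith
  refine ⟨hCpos, hanti, htend, hF1, ?_⟩
  -- existence of a point with F > 0
  obtain ⟨z₀, hz₀mem, hz₀pos⟩ : ∃ z₀, z₀ ∈ Set.Ioo (0:ℝ) 1 ∧ 0 < F z₀ := by
    have h1 : ∀ᶠ z in nhdsWithin (0:ℝ) (Set.Ioi 0), 0 < F z :=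
      htend.eventually_gt_atTop 0
    have h2 : ∀ᶠ z in nhdsWithin (0:ℝ) (Set.Ioi 0), z ∈ Set.Ioo (0:ℝ) 1 :=
      Ioo_mem_nhdsGT_of_mem (by norm_num : (0:ℝ) ∈ Set.Ico (0:ℝ) 1)
    obtain ⟨z₀, hz1, hz2⟩ := (h1.and h2).exists
    exact ⟨z₀, hz2, hz1⟩
  -- continuity on [z₀, 1]
  have hcont : ContinuousOn F (Set.Icc z₀ 1) := by
    have hne : ∀ z ∈ Set.Icc z₀ 1, z * b ≠ 0 := by
      intro z hz
      have : 0 < z := lt_of_lt_of_le hz₀mem.1 hz.1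
      positivity
    have hG : ContinuousOn
        (fun z => a ^ k * (1 + 1 / (z * b)) ^ (k+1) * (a - 1 + a / (z * b)) * C - z)
        (Set.Icc z₀ 1) := by
      apply ContinuousOn.sub _ continuousOn_id
      apply ContinuousOn.mul _ continuousOn_const
      apply ContinuousOn.mul
      · apply ContinuousOn.mul continuousOn_const
        apply ContinuousOn.pow
        apply ContinuousOn.add continuousOn_const
        exact ContinuousOn.div continuousOn_const (by fun_prop) hne
      · apply ContinuousOn.add continuousOn_const
        exact ContinuousOn.div continuousOn_const (by fun_prop) hne
    exact hG.congr (fun z _ => hFz z)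
  obtain ⟨z, hzIcc, hz0⟩ : ∃ z ∈ Set.Icc z₀ 1, F z = 0 := by
    have h01 : (0:ℝ) ∈ Set.Icc (F 1) (F z₀) := ⟨hF1.le, hz₀pos.le⟩
    obtain ⟨z, hz, hz'⟩ := intermediate_value_Icc' (le_of_lt hz₀mem.2) hcont h01
    exact ⟨z, hz, hz'⟩
  have hzIoo : z ∈ Set.Ioo (0:ℝ) 1 := by
    refine ⟨lt_of_lt_of_le hz₀mem.1 hzIcc.1, ?_⟩
    rcases lt_or_eq_of_le hzIcc.2 with h | h
    · exact h
    · exfalso; rw [h] at hz0; linarith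
  refine ⟨z, ⟨hzIoo, hz0⟩, ?_⟩
  rintro y ⟨hy, hy0⟩
  exact hanti.injOn ⟨hy.1, hy.2.le⟩ ⟨hzIoo.1, hzIoo.2.le⟩ (by rw [hy0, hz0])
end
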